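/- Let r_1, …, r_{D+1} be exchangeable random variables whose joint distribution is almost surely tie-free. Then the rank of r_{D+1} among r_1, …, r_{D+1} is uniformly distributed on {1, …, D+1}. -/

import Mathlib

open MeasureTheory ENNReal

/-- Rank of coordinate `i` in a vector `x`. -/
noncomputable def Rnk {n : ℕ} (i : Fin n) (x : Fin n → ℝ) : ℕ :=
  (Finset.univ.filter fun k => x k ≤ x i).card

lemma measurable_Rnk {n : ℕ} (i : Fin n) : Measurable fun x : Fin n → ℝ => Rnk i x := by
  have : (fun x : Fin n → ℝ => Rnk i x)
      = fun x => ∑ k : Fin n, if x k ≤ x i then 1 else 0 := by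
    funext x
    rw [Rnk, Finset.card_filter]
  rw [this]
  exact Finset.measurable_sum _ fun k _ =>
    Measurable.ite (measurableSet_le (measurable_pi_apply k) (measurable_pi_apply i))
      measurable_const measurable_const

lemma Rnk_lt {n : ℕ} {x : Fin n → ℝ} {i j : Fin n} (h : x i < x j) :
    Rnk i x < Rnk j x := by
  apply Finset.card_lt_card
  constructor
  · intro k hk
    simp only [Finset.mem_filter, Finset.mem_univ, true_and] at hk ⊢
    exact hk.trans h.le
  · intro hsub
    have hj : j ∈ Finset.univ.filter fun k => x k ≤ x j := by simp
    have := hsub hj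
    simp only [Finset.mem_filter, Finset.mem_univ, true_and] at this
    exact absurd this (not_le.mpr h)

lemma Rnk_inj {n : ℕ} {x : Fin n → ℝ} (hx : Function.Injective x) :
    Function.Injective fun i => Rnk i x := by
  intro i k hik
  by_contra hne
  have hxne : x i ≠ x k := fun h => hne (hx h)
  rcases lt_or_gt_of_ne hxne with h | h
  · exact absurd hik (Rnk_lt h).ne
  · exact absurd hik.symm (Rnk_lt h).ne

lemma Rnk_mem_Icc {n : ℕ} (i : Fin n) (x : Fin n → ℝ) : Rnk i x ∈ Finset.Icc 1 n := by
  rw [Finset.mem_Icc]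
  constructor
  · have : i ∈ Finset.univ.filter fun k => x k ≤ x i := by simp
    exact Finset.card_pos.mpr ⟨i, this⟩
  · calc Rnk i x ≤ Finset.univ.card := Finset.card_filter_le _ _
    _ = n := by simp

lemma Rnk_surj {n : ℕ} {x : Fin n → ℝ} (hx : Function.Injective x)
    {j : ℕ} (hj : j ∈ Finset.Icc 1 n) : ∃ i, Rnk i x = j := by
  have himg : (Finset.univ.image fun i => Rnk i x) = Finset.Icc 1 n := by
    apply Finset.eq_of_subset_of_card_le
    · intro m hm
      rcases Finset.mem_image.mp hm with ⟨i, _, rfl⟩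
      exact Rnk_mem_Icc i x
    · rw [Finset.card_image_of_injective _ (Rnk_inj hx)]
      simp [Nat.card_Icc]
  rw [← himg] at hj
  rcases Finset.mem_image.mp hj with ⟨i, _, hi⟩
  exact ⟨i, hi⟩

lemma card_filter_perm {n : ℕ} (σ : Equiv.Perm (Fin n)) (q : Fin n → Prop)
    [DecidablePred q] :
    (Finset.univ.filter fun k => q (σ k)).card = (Finset.univ.filter q).card := by
  apply Finset.card_bij (fun k _ => σ k)
  · intro k hk
    simp only [Finset.mem_filter, Finset.mem_univ, true_and] at hk ⊢
    exact hk
  · intro a ha b hb hab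
    exact σ.injective hab
  · intro m hm
    simp only [Finset.mem_filter, Finset.mem_univ, true_and] at hm
    exact ⟨σ⁻¹ m, by simp [hm], by simp⟩

/-- for exchangeable, almost-surely tie-free random variables
r_1,…,r_{D+1}, the rank of r_{D+1} among all of them is uniform on {1,…,D+1}. -/
theorem stmt_7 (D : ℕ) {Ω : Type*} [MeasurableSpace Ω]
    (P : Measure Ω) [IsProbabilityMeasure P]
    (r : Fin (D + 1) → Ω → ℝ) (hmeas : ∀ i, Measurable (r i))
    (hexch : ∀ σ : Equiv.Perm (Fin (D + 1)),
      Measure.map (fun ω i => r (σ i) ω) P = Measure.map (fun ω i => r i ω) P)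
    (hties : P {ω | ∃ i j, i ≠ j ∧ r i ω = r j ω} = 0)
    (rank : Ω → ℕ)
    (hrank : ∀ ω, rank ω =
      (Finset.univ.filter fun i : Fin (D + 1) =>
        r i ω ≤ r (Fin.last D) ω).card) :
    ∀ j ∈ Finset.Icc 1 (D + 1), P {ω | rank ω = j} = (D + 1 : ℝ≥0∞)⁻¹ := by
  classical
  intro j hj
  set f : Ω → Fin (D + 1) → ℝ := fun ω i => r i ω with hf_def
  have hf : Measurable f := measurable_pi_lambda _ hmeas
  set μ : Measure (Fin (D + 1) → ℝ) := P.map f with hμ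
  have hPμ : IsProbabilityMeasure μ := Measure.isProbabilityMeasure_map hf.aemeasurable
  set C : Fin (D + 1) → Set (Fin (D + 1) → ℝ) := fun i => {x | Rnk i x = j} with hC
  have hCmeas : ∀ i, MeasurableSet (C i) :=
    fun i => (measurable_Rnk i) (measurableSet_singleton j)
  set T : Set (Fin (D + 1) → ℝ) := {x | ∃ i k, i ≠ k ∧ x i = x k} with hT_def
  have hTmeas : MeasurableSet T := by
    have : T = ⋃ i, ⋃ k, ⋃ (_ : i ≠ k), {x : Fin (D + 1) → ℝ | x i = x k} := by
      ext x; simp [hT_def]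
    rw [this]
    exact MeasurableSet.iUnion fun i => MeasurableSet.iUnion fun k =>
      MeasurableSet.iUnion fun _ =>
        measurableSet_eq_fun (measurable_pi_apply i) (measurable_pi_apply k)
  have hT0 : μ T = 0 := by
    rw [hμ, Measure.map_apply hf hTmeas]
    exact hties
  have hTc1 : μ Tᶜ = 1 := by
    rw [measure_compl hTmeas (measure_ne_top _ _), hT0, measure_univ, tsub_zero]
  have hinjx : ∀ x ∈ Tᶜ, Function.Injective x := by
    intro x hx a b hab
    by_contra hne
    exact hx ⟨a, b, hne, hab⟩
  -- the union over ranks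
  have hunion : (⋃ i, C i ∩ Tᶜ) = Tᶜ := by
    ext x
    constructor
    · rintro ⟨s, ⟨i, rfl⟩, hxs⟩
      exact hxs.2
    · intro hx
      rcases Rnk_surj (hinjx x hx) hj with ⟨i, hi⟩
      exact Set.mem_iUnion.mpr ⟨i, hi, hx⟩
  have hdisj : Pairwise (Function.onFun Disjoint fun i => C i ∩ Tᶜ) := by
    intro a b hab
    rw [Function.onFun, Set.disjoint_left]
    rintro x ⟨hxa, hxT⟩ ⟨hxb, _⟩
    exact hab (Rnk_inj (hinjx x hxT) (hxa.trans hxb.symm))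
  have hsum : ∑ i : Fin (D + 1), μ (C i ∩ Tᶜ) = 1 := by
    rw [← tsum_fintype (L := SummationFilter.unconditional _), ← measure_iUnion hdisj
      (fun i => (hCmeas i).inter hTmeas.compl), hunion, hTc1]
  have hmuC : ∀ i, μ (C i ∩ Tᶜ) = μ (C i) := by
    intro i
    apply le_antisymm (measure_mono Set.inter_subset_left)
    calc μ (C i) ≤ μ ((C i ∩ Tᶜ) ∪ T) := by
          apply measure_mono
          intro x hx
          by_cases h : x ∈ T
          · exact Or.inr h
          · exact Or.inl ⟨hx, h⟩
      _ ≤ μ (C i ∩ Tᶜ) + μ T := measure_union_le _ _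
      _ = μ (C i ∩ Tᶜ) := by rw [hT0, add_zero]
  have hswap : ∀ i, μ (C i) = μ (C (Fin.last D)) := by
    intro i
    set σ : Equiv.Perm (Fin (D + 1)) := Equiv.swap i (Fin.last D) with hσ
    set g : (Fin (D + 1) → ℝ) → (Fin (D + 1) → ℝ) := fun x k => x (σ k) with hg_def
    have hg : Measurable g := measurable_pi_lambda _ fun k => measurable_pi_apply _
    have hinv : μ.map g = μ := by
      rw [hμ, Measure.map_map hg hf]
      exact hexch σ
    have hpre : g ⁻¹' C (Fin.last D) = C i := by
      ext x
      simp only [hC, Set.mem_preimage, Set.mem_setOf_eq]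
      have hgx : Rnk (Fin.last D) (g x) = Rnk i x := by
        unfold Rnk
        have h3 : σ (Fin.last D) = i := Equiv.swap_apply_right _ _
        calc (Finset.univ.filter fun k => g x k ≤ g x (Fin.last D)).card
            = (Finset.univ.filter fun k => x (σ k) ≤ x i).card := by
              simp only [hg_def, h3]
          _ = (Finset.univ.filter fun k => x k ≤ x i).card :=
              card_filter_perm σ (fun k => x k ≤ x i)
      rw [hgx]
    calc μ (C i) = μ (g ⁻¹' C (Fin.last D)) := by rw [hpre]
      _ = (μ.map g) (C (Fin.last D)) := (Measure.map_apply hg (hCmeas _)).symm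
      _ = μ (C (Fin.last D)) := by rw [hinv]
  have hkey : ((D + 1 : ℕ) : ℝ≥0∞) * μ (C (Fin.last D)) = 1 := by
    have : ∑ i : Fin (D + 1), μ (C i ∩ Tᶜ) = (D + 1 : ℕ) * μ (C (Fin.last D)) := by
      calc ∑ i : Fin (D + 1), μ (C i ∩ Tᶜ)
          = ∑ _i : Fin (D + 1), μ (C (Fin.last D)) := by
            apply Finset.sum_congr rfl
            intro i _
            rw [hmuC i, hswap i]
        _ = (D + 1 : ℕ) * μ (C (Fin.last D)) := by
            rw [Finset.sum_const, Finset.card_univ, Fintype.card_fin, nsmul_eq_mul]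
    rw [← this, hsum]
  have hfinal : μ (C (Fin.last D)) = ((D + 1 : ℕ) : ℝ≥0∞)⁻¹ := by
    have hne : ((D + 1 : ℕ) : ℝ≥0∞) ≠ 0 := by simp
    have hnt : ((D + 1 : ℕ) : ℝ≥0∞) ≠ ⊤ := by simp
    calc μ (C (Fin.last D))
        = (((D + 1 : ℕ) : ℝ≥0∞)⁻¹ * ((D + 1 : ℕ) : ℝ≥0∞)) * μ (C (Fin.last D)) := by
          rw [ENNReal.inv_mul_cancel hne hnt, one_mul]
      _ = ((D + 1 : ℕ) : ℝ≥0∞)⁻¹ * (((D + 1 : ℕ) : ℝ≥0∞) * μ (C (Fin.last D))) := by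
          rw [mul_assoc]
      _ = ((D + 1 : ℕ) : ℝ≥0∞)⁻¹ := by rw [hkey, mul_one]
  have hset : {ω | rank ω = j} = f ⁻¹' C (Fin.last D) := by
    ext ω
    simp only [Set.mem_setOf_eq, Set.mem_preimage, hC]
    rw [hrank ω]
    rfl
  rw [hset, ← Measure.map_apply hf (hCmeas _), ← hμ, hfinal]
  norm_num
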